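/- arXiv:2603.25151 — 4 statements merged into one kernel-verified Lean document; each statement's English description precedes it below -/
import Mathlib

section
/- Let μ be a Borel probability measure on ℝ, let f : ℝ → ℂ be a bounded Borel measurable function, and let u ∈ Ĥ. Then the function x ↦ ⟨Ŝ_x u, M_f (Ŝ_x u)⟩ is μ-integrable and ∫_ℝ ⟨Ŝ_x u, M_f (Ŝ_x u)⟩ dμ(x) = ⟨u, M_g u⟩, where g : ℝ → ℂ is the bounded Borel function g(p) = ∫_ℝ f(p − x) dμ(x). That is, the averaged unitary shift channel acts on multiplication observables M_f by replacing f with its convolution-average g. -/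
open MeasureTheory Complex Filter
open scoped ComplexConjugate ENNReal Classical

noncomputable section

/-- `Ĥ = L²(ℝ, ν; ℂ)`: the Hilbert space of complex-valued functions on `ℝ` that are
square-summable with respect to the counting measure, realized as `lp (fun _ : ℝ => ℂ) 2`
(functions with countable support and square-summable values), with inner product
`⟪u, v⟫ = ∑' x, conj (u x) * v x`, conjugate-linear in the first argument. -/
abbrev Hhat : Type := lp (fun _ : ℝ => ℂ) 2

lemma memℓp_shift (h : ℝ) (u : Hhat) : Memℓp (fun x : ℝ => u (x + h)) 2 := by
  refine memℓp_gen ?_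
  have hs : Summable fun x : ℝ => ‖u x‖ ^ (2 : ℝ≥0∞).toReal :=
    (lp.memℓp u).summable (by norm_num)
  exact ((Equiv.addRight h).summable_iff
    (f := fun x : ℝ => ‖u x‖ ^ (2 : ℝ≥0∞).toReal)).mpr hs

/-- The shift operator `Ŝ_h` on `Ĥ`, `(Ŝ_h u) x = u (x + h)`. -/
def Shat (h : ℝ) (u : Hhat) : Hhat := ⟨fun x : ℝ => u (x + h), memℓp_shift h u⟩

lemma memℓp_mul_of_le {g : ℝ → ℂ} {C : ℝ} (hg : ∀ x, ‖g x‖ ≤ C) (u : Hhat) :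
    Memℓp (fun x : ℝ => g x * u x) 2 := by
  refine memℓp_gen ?_
  have hs : Summable fun x : ℝ => ‖u x‖ ^ (2 : ℝ≥0∞).toReal :=
    (lp.memℓp u).summable (by norm_num)
  have h2 : (2 : ℝ≥0∞).toReal = (2 : ℝ) := by norm_num
  rw [h2] at hs ⊢
  refine Summable.of_nonneg_of_le (fun x => by positivity) (fun x => ?_) (hs.mul_left (C ^ 2))
  calc ‖g x * u x‖ ^ (2 : ℝ) = ‖g x‖ ^ (2 : ℝ) * ‖u x‖ ^ (2 : ℝ) := by
        rw [norm_mul, Real.mul_rpow (norm_nonneg _) (norm_nonneg _)]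
    _ ≤ C ^ (2 : ℝ) * ‖u x‖ ^ (2 : ℝ) := by gcongr; exact hg x
    _ = C ^ 2 * ‖u x‖ ^ (2 : ℝ) := by rw [Real.rpow_two]

/-- The modulation operator `M̂_a` on `Ĥ`, `(M̂_a u) x = e^{iax} u x`. -/
def Mhat (a : ℝ) (u : Hhat) : Hhat :=
  ⟨fun x : ℝ => Complex.exp ((a * x : ℝ) * Complex.I) * u x,
    memℓp_mul_of_le (C := 1) (fun x => le_of_eq (Complex.norm_exp_ofReal_mul_I _)) u⟩

/-- Multiplication `M_f u` of an element of `Ĥ` by a function `f : ℝ → ℂ`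
(with junk value `0` in case the product fails to be square-summable; for bounded `f`
the `dite` always takes the first branch). -/
def mulElem (f : ℝ → ℂ) (u : Hhat) : Hhat :=
  if h : Memℓp (fun x : ℝ => f x * u x) 2 then ⟨_, h⟩ else 0

/-- let `μ` be a Borel probability measure on `ℝ`, `f : ℝ → ℂ` a bounded Borel
function and `u ∈ Ĥ`. Then `x ↦ ⟨Ŝ_x u, M_f (Ŝ_x u)⟩` is `μ`-integrable and
`∫ ⟨Ŝ_x u, M_f (Ŝ_x u)⟩ dμ(x) = ⟨u, M_g u⟩` where `g(p) = ∫ f(p − x) dμ(x)`: the averaged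
unitary shift channel acts on multiplication observables by convolution-averaging. -/
theorem averaged_shift_channel_on_multiplication_observables
    (μ : Measure ℝ) [IsProbabilityMeasure μ]
    (f : ℝ → ℂ) (hf : Measurable f) (C : ℝ) (hC : ∀ x, ‖f x‖ ≤ C) (u : Hhat) :
    Integrable (fun x : ℝ => (inner ℂ (Shat x u) (mulElem f (Shat x u)) : ℂ)) μ ∧
    ∫ x, (inner ℂ (Shat x u) (mulElem f (Shat x u)) : ℂ) ∂μ
      = (inner ℂ u (mulElem (fun p : ℝ => ∫ x, f (p - x) ∂μ) u) : ℂ) := by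
  classical
  have hC0 : 0 ≤ C := le_trans (norm_nonneg _) (hC 0)
  -- square-summability of u
  have hu2 : Summable (fun q : ℝ => ‖u q‖ ^ 2) := by
    have h := (lp.memℓp u).summable (p := 2) (by norm_num)
    have h2 : (2 : ℝ≥0∞).toReal = (2 : ℝ) := by norm_num
    rw [h2] at h
    have : (fun q : ℝ => ‖u q‖ ^ (2 : ℝ)) = fun q : ℝ => ‖u q‖ ^ 2 := by
      funext q; rw [Real.rpow_two]
    rwa [this] at h
  -- the countable support
  set s : Set ℝ := Function.support (fun q : ℝ => (u : ℝ → ℂ) q) with hs_def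
  have hs_count : s.Countable := by
    have h := hu2.countable_support
    have : Function.support (fun q : ℝ => ‖u q‖ ^ 2) = s := by
      ext q; simp [hs_def, Function.mem_support, pow_eq_zero_iff]
    rwa [this] at h
  haveI : Countable ↥s := hs_count.to_subtype
  set F : ↥s → ℝ → ℂ := fun q x => conj (u (q : ℝ)) * (f ((q : ℝ) - x) * u (q : ℝ)) with hF_def
  set bnd : ↥s → ℝ := fun q => C * ‖u (q : ℝ)‖ ^ 2 with hbnd_def
  have hbs : Summable bnd := (hu2.subtype s).mul_left C
  have hFle : ∀ (q : ↥s) (x : ℝ), ‖F q x‖ ≤ bnd q := by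
    intro q x
    have : ‖F q x‖ = ‖f ((q : ℝ) - x)‖ * ‖u (q : ℝ)‖ ^ 2 := by
      simp [hF_def, norm_mul, pow_two]; ring
    rw [this, hbnd_def]
    exact mul_le_mul_of_nonneg_right (hC _) (sq_nonneg _)
  have hFnsummable : ∀ x : ℝ, Summable (fun q : ↥s => ‖F q x‖) := fun x =>
    Summable.of_nonneg_of_le (fun q => norm_nonneg _) (fun q => hFle q x) hbs
  have hFsummable : ∀ x : ℝ, Summable (fun q : ↥s => F q x) := fun x =>
    Summable.of_norm_bounded hbs (fun q => hFle q x)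
  -- measurability
  have hFmeas : ∀ q : ↥s, Measurable (F q) := by
    intro q
    exact ((hf.comp (measurable_const.sub measurable_id)).mul_const _).const_mul _
  -- key identity A
  have keyA : ∀ x : ℝ, (inner ℂ (Shat x u) (mulElem f (Shat x u)) : ℂ) = ∑' q : ↥s, F q x := by
    intro x
    have hmem : Memℓp (fun p : ℝ => f p * (Shat x u) p) 2 := memℓp_mul_of_le hC (Shat x u)
    have h1 : (inner ℂ (Shat x u) (mulElem f (Shat x u)) : ℂ)
        = ∑' p : ℝ, conj ((Shat x u) p) * (f p * (Shat x u) p) := by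
      rw [mulElem, dif_pos hmem, lp.inner_eq_tsum]
      exact tsum_congr fun i => RCLike.inner_apply' _ _
    have hShat : ∀ p : ℝ, (Shat x u) p = u (p + x) := fun p => rfl
    set G : ℝ → ℂ := fun q => conj (u q) * (f (q - x) * u q) with hG_def
    have h2 : (fun p : ℝ => conj ((Shat x u) p) * (f p * (Shat x u) p))
        = fun p : ℝ => G ((Equiv.addRight x) p) := by
      funext p
      simp [hG_def, hShat, Equiv.coe_addRight, add_sub_cancel_right]
    have h3 : ∑' p : ℝ, G ((Equiv.addRight x) p) = ∑' q : ℝ, G q :=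
      (Equiv.addRight x).tsum_eq G
    have h4 : ∑' q : ↥s, G q = ∑' q : ℝ, G q := by
      apply tsum_subtype_eq_of_support_subset
      intro q hq
      simp only [hs_def, Function.mem_support, ne_eq]
      intro h0
      exact hq (by simp [hG_def, h0])
    rw [h1, h2, h3, ← h4]
  -- integrability of each F q and of the tsum
  have hfx : ∀ p : ℝ, Integrable (fun x : ℝ => f (p - x)) μ := by
    intro p
    refine Integrable.mono' (integrable_const C)
      ((hf.comp (measurable_const.sub measurable_id)).aestronglyMeasurable) ?_
    exact Eventually.of_forall fun x => hC _
  have hFi : ∀ q : ↥s, Integrable (F q) μ := fun q =>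
    (((hfx (q : ℝ)).mul_const _).const_mul _)
  have hFnorm_sum : Summable fun q : ↥s => ∫ x, ‖F q x‖ ∂μ := by
    refine Summable.of_nonneg_of_le (fun q => integral_nonneg fun x => norm_nonneg _)
      (fun q => ?_) hbs
    calc ∫ x, ‖F q x‖ ∂μ ≤ ∫ _x, bnd q ∂μ :=
          integral_mono (hFi q).norm (integrable_const _) (fun x => hFle q x)
      _ = bnd q := by simp
  -- strong measurability of the tsum
  have hSM : StronglyMeasurable (fun x : ℝ => ∑' q : ↥s, F q x) := by
    refine stronglyMeasurable_of_tendsto (atTop : Filter (Finset ↥s))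
      (f := fun t : Finset ↥s => fun x : ℝ => ∑ q ∈ t, F q x)
      (fun t => ?_) ?_
    · exact (Finset.measurable_sum t fun q _ => hFmeas q).stronglyMeasurable
    · rw [tendsto_pi_nhds]
      intro x
      exact (hFsummable x).hasSum
  -- integrability of the integrand
  have hint : Integrable (fun x : ℝ => ∑' q : ↥s, F q x) μ := by
    refine Integrable.mono' (integrable_const (∑' q : ↥s, bnd q))
      hSM.aestronglyMeasurable ?_
    refine Eventually.of_forall fun x => ?_
    calc ‖∑' q : ↥s, F q x‖ ≤ ∑' q : ↥s, ‖F q x‖ :=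
          norm_tsum_le_tsum_norm (hFnsummable x)
      _ ≤ ∑' q : ↥s, bnd q := Summable.tsum_le_tsum (fun q => hFle q x) (hFnsummable x) hbs
  have hint' : Integrable (fun x : ℝ => (inner ℂ (Shat x u) (mulElem f (Shat x u)) : ℂ)) μ := by
    have : (fun x : ℝ => (inner ℂ (Shat x u) (mulElem f (Shat x u)) : ℂ))
        = fun x : ℝ => ∑' q : ↥s, F q x := funext keyA
    rw [this]; exact hint
  refine ⟨hint', ?_⟩
  -- the integral computation
  have swap : ∑' q : ↥s, (∫ x, F q x ∂μ) = ∫ x, (∑' q : ↥s, F q x) ∂μ :=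
    integral_tsum_of_summable_integral_norm hFi hFnorm_sum
  set g : ℝ → ℂ := fun p => ∫ x, f (p - x) ∂μ with hg_def
  have hg : ∀ p, ‖g p‖ ≤ C := by
    intro p
    calc ‖g p‖ ≤ ∫ _x, C ∂μ :=
          norm_integral_le_of_norm_le (integrable_const C) (Eventually.of_forall fun x => hC _)
      _ = C := by simp
  have hmemg : Memℓp (fun p : ℝ => g p * u p) 2 := memℓp_mul_of_le hg u
  have keyB : (inner ℂ u (mulElem g u) : ℂ) = ∑' q : ↥s, conj (u (q : ℝ)) * (g (q : ℝ) * u (q : ℝ)) := by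
    have h1 : (inner ℂ u (mulElem g u) : ℂ) = ∑' p : ℝ, conj (u p) * (g p * u p) := by
      rw [mulElem, dif_pos hmemg, lp.inner_eq_tsum]
      exact tsum_congr fun i => RCLike.inner_apply' _ _
    rw [h1]
    symm
    refine tsum_subtype_eq_of_support_subset (f := fun p : ℝ => conj (u p) * (g p * u p)) ?_
    intro q hq
    simp only [hs_def, Function.mem_support, ne_eq]
    intro h0
    exact hq (by simp [h0])
  have hintF : ∀ q : ↥s, ∫ x, F q x ∂μ = conj (u (q : ℝ)) * (g (q : ℝ) * u (q : ℝ)) := by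
    intro q
    rw [hF_def]
    simp only
    rw [integral_const_mul, integral_mul_const]
  calc ∫ x, (inner ℂ (Shat x u) (mulElem f (Shat x u)) : ℂ) ∂μ
      = ∫ x, (∑' q : ↥s, F q x) ∂μ := by simp_rw [keyA]
    _ = ∑' q : ↥s, (∫ x, F q x ∂μ) := swap.symm
    _ = ∑' q : ↥s, conj (u (q : ℝ)) * (g (q : ℝ) * u (q : ℝ)) := by
        exact tsum_congr hintF
    _ = (inner ℂ u (mulElem g u) : ℂ) := keyB.symm


end
end

section
/- Let μ be a Borel probability measure on ℝ, let m be a finite complex Borel measure on ℝ, and let u ∈ Ĥ. Then ∫_ℝ ∫_ℝ ⟨Ŝ_x u, Ŝ_a (Ŝ_x u)⟩ dm(a) dμ(x) = ∫_ℝ ⟨u, Ŝ_a u⟩ dm(a); that is, the averaged shift channel leaves invariant the value of the state on every observable of convolution type A = ∫ Ŝ_a dm(a). Moreover, if m has no atoms (m({a}) = 0 for every a ∈ ℝ), then ∫_ℝ ⟨u, Ŝ_a u⟩ dm(a) = 0. -/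
open MeasureTheory Complex Filter
open scoped ComplexConjugate ENNReal Classical

noncomputable section

/-- The integral `∫ f dm` of a (bounded) function against a finite complex Borel measure `m`,
via the Jordan decompositions of the real and imaginary parts of `m`. -/
def integralCM (m : MeasureTheory.ComplexMeasure ℝ) (f : ℝ → ℂ) : ℂ :=
  ((∫ a, f a ∂(ComplexMeasure.re m).toJordanDecomposition.posPart)
      - ∫ a, f a ∂(ComplexMeasure.re m).toJordanDecomposition.negPart)
    + Complex.I *
      ((∫ a, f a ∂(ComplexMeasure.im m).toJordanDecomposition.posPart)
        - ∫ a, f a ∂(ComplexMeasure.im m).toJordanDecomposition.negPart)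

lemma inner_Shat (a : ℝ) (u v : Hhat) :
    (inner ℂ u (Shat a v) : ℂ) = ∑' x : ℝ, conj (u x) * v (x + a) := by
  rw [lp.inner_eq_tsum]; simp only [RCLike.inner_apply']; rfl

lemma inner_shift_invariant (x a : ℝ) (u : Hhat) :
    (inner ℂ (Shat x u) (Shat a (Shat x u)) : ℂ) = inner ℂ u (Shat a u) := by
  rw [inner_Shat, inner_Shat]
  rw [← (Equiv.addRight x).tsum_eq (fun y : ℝ => conj (u y) * u (y + a))]
  congr 1; ext y
  simp only [Equiv.coe_addRight, Shat]
  ring_nf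

lemma jordan_singleton_zero (s : SignedMeasure ℝ) (a : ℝ) (h : s {a} = 0) :
    s.toJordanDecomposition.posPart {a} = 0 ∧ s.toJordanDecomposition.negPart {a} = 0 := by
  obtain ⟨t, ht, h1, h2⟩ := s.toJordanDecomposition.mutuallySingular
  have hspec := s.toSignedMeasure_toJordanDecomposition
  have happ : s {a} = (s.toJordanDecomposition.posPart {a}).toReal
      - (s.toJordanDecomposition.negPart {a}).toReal := by
    conv_lhs => rw [← hspec]
    rw [JordanDecomposition.toSignedMeasure, VectorMeasure.sub_apply,
      Measure.toSignedMeasure_apply_measurable (measurableSet_singleton a),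
      Measure.toSignedMeasure_apply_measurable (measurableSet_singleton a)]
    rfl
  have hpfin : s.toJordanDecomposition.posPart {a} ≠ ⊤ := measure_ne_top _ _
  have hnfin : s.toJordanDecomposition.negPart {a} ≠ ⊤ := measure_ne_top _ _
  by_cases hat : a ∈ t
  · have hp : s.toJordanDecomposition.posPart {a} = 0 :=
      measure_mono_null (Set.singleton_subset_iff.2 hat) h1
    have : (s.toJordanDecomposition.negPart {a}).toReal = 0 := by
      rw [h, hp] at happ; simpa using happ
    exact ⟨hp, by simpa [ENNReal.toReal_eq_zero_iff, hnfin] using this⟩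
  · have hn : s.toJordanDecomposition.negPart {a} = 0 :=
      measure_mono_null (Set.singleton_subset_iff.2 hat) h2
    have : (s.toJordanDecomposition.posPart {a}).toReal = 0 := by
      rw [h, hn] at happ; simpa using happ.symm
    exact ⟨by simpa [ENNReal.toReal_eq_zero_iff, hpfin] using this, hn⟩

lemma support_countable (u : Hhat) : (Function.support fun x : ℝ => u x).Countable := by
  have hs : Summable fun x : ℝ => ‖u x‖ ^ (2 : ℝ≥0∞).toReal :=
    (lp.memℓp u).summable (by norm_num)
  refine hs.countable_support.mono ?_
  intro x hx
  simp only [Function.mem_support] at hx ⊢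
  have h0 : ‖u x‖ ≠ 0 := norm_ne_zero_iff.mpr hx
  positivity

/-- let `μ` be a Borel probability measure on `ℝ`, `m` a finite complex Borel
measure on `ℝ`, and `u ∈ Ĥ`. Then
`∫∫ ⟨Ŝ_x u, Ŝ_a (Ŝ_x u)⟩ dm(a) dμ(x) = ∫ ⟨u, Ŝ_a u⟩ dm(a)`: the averaged shift channel
leaves invariant the value of the state on every observable of convolution type
`A = ∫ Ŝ_a dm(a)`. Moreover, if `m` has no atoms then `∫ ⟨u, Ŝ_a u⟩ dm(a) = 0`. -/
theorem averaged_shift_channel_on_convolution_observables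
    (μ : Measure ℝ) [IsProbabilityMeasure μ] (m : MeasureTheory.ComplexMeasure ℝ)
    (u : Hhat) :
    (∫ x, integralCM m (fun a => (inner ℂ (Shat x u) (Shat a (Shat x u)) : ℂ)) ∂μ
      = integralCM m (fun a => (inner ℂ u (Shat a u) : ℂ))) ∧
    ((∀ a : ℝ, m {a} = 0) →
      integralCM m (fun a => (inner ℂ u (Shat a u) : ℂ)) = 0) := by
  have hconst : ∀ x : ℝ, integralCM m (fun a => (inner ℂ (Shat x u) (Shat a (Shat x u)) : ℂ))
      = integralCM m (fun a => (inner ℂ u (Shat a u) : ℂ)) := by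
    intro x
    simp only [inner_shift_invariant]
  constructor
  · rw [integral_congr_ae (Eventually.of_forall hconst), integral_const,
      probReal_univ, one_smul]
  · intro hm
    set S := Function.support fun x : ℝ => u x with hS
    have hScount : S.Countable := support_countable u
    set N : Set ℝ := Set.image2 (fun s t : ℝ => t - s) S S with hN
    have hNcount : N.Countable := hScount.image2 hScount _
    have hsubset : ∀ a : ℝ, a ∉ N → (inner ℂ u (Shat a u) : ℂ) = 0 := by
      intro a ha
      rw [inner_Shat]
      have hz : ∀ x : ℝ, conj (u x) * u (x + a) = 0 := by
        intro x
        by_cases hx : u x = 0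
        · simp [hx]
        by_cases hxa : u (x + a) = 0
        · simp [hxa]
        exact absurd ⟨x, hx, x + a, hxa, by ring⟩ ha
      simp only [hz]
      exact tsum_zero
    -- for each of the four measures, the integrand is a.e. zero
    have key : ∀ ν : Measure ℝ, (∀ b : ℝ, ν {b} = 0) →
        ∫ a, (inner ℂ u (Shat a u) : ℂ) ∂ν = 0 := by
      intro ν hν
      haveI : NullSingletonClass ν := ⟨hν⟩
      refine integral_eq_zero_of_ae ?_
      refine measure_mono_null ?_ (hNcount.measure_zero ν)
      intro a ha
      simp only [Set.mem_setOf_eq, Set.mem_compl_iff] at ha ⊢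
      by_contra hcon
      exact ha (hsubset a hcon)
    have hre : ∀ b : ℝ, (ComplexMeasure.re m) {b} = 0 := by
      intro b; rw [show ((ComplexMeasure.re m) {b}) = (m {b}).re from rfl, hm b]; rfl
    have him : ∀ b : ℝ, (ComplexMeasure.im m) {b} = 0 := by
      intro b; rw [show ((ComplexMeasure.im m) {b}) = (m {b}).im from rfl, hm b]; rfl
    have h1 := fun b => (jordan_singleton_zero _ b (hre b)).1
    have h2 := fun b => (jordan_singleton_zero _ b (hre b)).2
    have h3 := fun b => (jordan_singleton_zero _ b (him b)).1
    have h4 := fun b => (jordan_singleton_zero _ b (him b)).2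
    unfold integralCM
    rw [key _ h1, key _ h2, key _ h3, key _ h4]
    simp


end
end

section
/- Let μ be a Borel probability measure on ℝ with no atoms (μ({x}) = 0 for every x ∈ ℝ). Then for all u, v ∈ Ĥ, ∫_ℝ |⟨Ŝ_x u, v⟩|² dμ(x) = 0. In particular, the average over μ of the pure state ρ_{Ŝ_x u} annihilates the projector onto every vector v ∈ Ĥ, so the averaged shift channel maps every vector pure state to a singular quantum state. -/
open MeasureTheory Complex Filter
open scoped ComplexConjugate ENNReal Classical

noncomputable section

lemma support_countable_aux (u : Hhat) : (Function.support fun x => u x).Countable := by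
  have hs : Summable fun x : ℝ => ‖u x‖ ^ (2 : ℝ≥0∞).toReal :=
    (lp.memℓp u).summable (by norm_num)
  refine hs.countable_support.mono ?_
  intro x hx
  simp only [Function.mem_support] at hx ⊢
  have : ‖u x‖ ≠ 0 := norm_ne_zero_iff.mpr hx
  positivity

/-- let `μ` be an atomless Borel probability measure on `ℝ`. Then for all
`u, v ∈ Ĥ`, `∫ |⟨Ŝ_x u, v⟩|² dμ(x) = 0`: the average over `μ` of the pure state `ρ_{Ŝ_x u}`
annihilates the projector onto every vector `v ∈ Ĥ`, so the averaged shift channel maps every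
vector pure state to a singular quantum state. -/
theorem averaged_shift_channel_produces_singular_states
    (μ : Measure ℝ) [IsProbabilityMeasure μ] (hμ : ∀ x : ℝ, μ {x} = 0) (u v : Hhat) :
    ∫ x, ‖(inner ℂ (Shat x u) v : ℂ)‖ ^ 2 ∂μ = 0 := by
  have hna : NullSingletonClass μ := ⟨hμ⟩
  set T : Set ℝ := (fun p : ℝ × ℝ => p.1 - p.2) ''
    ((Function.support fun x => u x) ×ˢ (Function.support fun x => v x)) with hTdef
  have hT : T.Countable :=
    ((support_countable_aux u).prod (support_countable_aux v)).image _
  have hT0 : μ T = 0 := hT.measure_zero μ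
  have hzero : ∀ x ∉ T, (inner ℂ (Shat x u) v : ℂ) = 0 := by
    intro x hx
    rw [lp.inner_eq_tsum]
    convert tsum_zero with y
    by_cases hv : v y = 0
    · simp [hv]
    by_cases hu : (Shat x u) y = 0
    · simp [hu]
    exact absurd ⟨(y + x, y), ⟨hu, hv⟩, by ring⟩ hx
  refine integral_eq_zero_of_ae ?_
  filter_upwards [measure_eq_zero_iff_ae_notMem.mp hT0] with x hx
  rw [hzero x hx]
  simp


end
end

section
/- Let μ be a Borel probability measure on ℝ with characteristic function χ_μ, and let u ∈ Ĥ have countable support {p_j}_{j∈ℕ} with coefficients c_j = u(p_j). Then for all v, w ∈ Ĥ, the function x ↦ ⟨v, M̂_x u⟩·⟨M̂_x u, w⟩ is μ-integrable and ∫_ℝ ⟨v, M̂_x u⟩ ⟨M̂_x u, w⟩ dμ(x) = Σ_{j,k} c_j conj(c_k) χ_μ(p_j − p_k) conj(v(p_j)) w(p_k), where the double series converges absolutely. In particular, the average over μ of the pure states ρ_{M̂_x u} is given by the density kernel (p_j, p_k) ↦ c_j conj(c_k) χ_μ(p_j − p_k), so the averaged modulation channel E Φ_ξ maps the pure state ρ_u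 to a normal state. -/
open MeasureTheory Complex Filter
open scoped ComplexConjugate ENNReal Classical

noncomputable section

lemma summable_norm_sq (u : Hhat) : Summable fun x : ℝ => ‖u x‖ ^ 2 := by
  have hs : Summable fun x : ℝ => ‖u x‖ ^ (2 : ℝ≥0∞).toReal :=
    (lp.memℓp u).summable (by norm_num)
  have h2 : (2 : ℝ≥0∞).toReal = (2 : ℝ) := by norm_num
  rw [h2] at hs
  simpa [Real.rpow_two] using hs

lemma summable_mul_of_sq {f g : ℕ → ℝ} (hf : Summable fun n => f n ^ 2)
    (hg : Summable fun n => g n ^ 2) (hf0 : ∀ n, 0 ≤ f n) (hg0 : ∀ n, 0 ≤ g n) :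
    Summable fun n => f n * g n := by
  refine Summable.of_nonneg_of_le (fun n => mul_nonneg (hf0 n) (hg0 n)) (fun n => ?_)
    ((hf.add hg).div_const 2)
  nlinarith [sq_nonneg (f n - g n)]

lemma exp_mul_conj_exp (r s : ℝ) :
    Complex.exp ((r : ℂ) * Complex.I) * conj (Complex.exp ((s : ℂ) * Complex.I))
      = Complex.exp (((r - s : ℝ) : ℂ) * Complex.I) := by
  rw [← Complex.exp_conj, ← Complex.exp_add]
  congr 1
  rw [map_mul, Complex.conj_ofReal, Complex.conj_I]
  push_cast
  ring


/-- let `μ` be a Borel probability measure on `ℝ` with characteristic function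
`χ_μ`, and let `u ∈ Ĥ` have countable support `{p_j}` with coefficients `c_j = u (p_j)`. Then
for all `v, w ∈ Ĥ`, the function `x ↦ ⟨v, M̂_x u⟩·⟨M̂_x u, w⟩` is `μ`-integrable, and
`∫ ⟨v, M̂_x u⟩⟨M̂_x u, w⟩ dμ(x) = Σ_{j,k} c_j conj(c_k) χ_μ(p_j − p_k) conj(v(p_j)) w(p_k)`,
the double series converging absolutely: the averaged modulation channel maps the pure state
`ρ_u` to a normal state with density kernel `(p_j, p_k) ↦ c_j conj(c_k) χ_μ(p_j − p_k)`. -/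
theorem averaged_modulation_channel_preserves_normality
    (μ : Measure ℝ) [IsProbabilityMeasure μ]
    (u : Hhat) (p : ℕ → ℝ) (hp : Function.Injective p) (c : ℕ → ℂ)
    (hc : ∀ j, u (p j) = c j) (hsupp : ∀ x : ℝ, u x ≠ 0 → x ∈ Set.range p)
    (v w : Hhat) :
    Integrable (fun x : ℝ => (inner ℂ v (Mhat x u) : ℂ) * (inner ℂ (Mhat x u) w : ℂ)) μ ∧
    Summable (fun jk : ℕ × ℕ =>
      ‖c jk.1 * conj (c jk.2) *
          (∫ y, Complex.exp (((p jk.1 - p jk.2) * y : ℝ) * Complex.I) ∂μ) *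
          conj (v (p jk.1)) * w (p jk.2)‖) ∧
    ∫ x, (inner ℂ v (Mhat x u) : ℂ) * (inner ℂ (Mhat x u) w : ℂ) ∂μ
      = ∑' jk : ℕ × ℕ,
          c jk.1 * conj (c jk.2) *
            (∫ y, Complex.exp (((p jk.1 - p jk.2) * y : ℝ) * Complex.I) ∂μ) *
            conj (v (p jk.1)) * w (p jk.2) := by
  classical
  have hMhat : ∀ (x t : ℝ), (Mhat x u) t = Complex.exp ((x * t : ℝ) * Complex.I) * u t :=
    fun x t => rfl
  -- coefficient kernel
  set A : ℕ × ℕ → ℂ :=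
    fun jk => conj (v (p jk.1)) * c jk.1 * (conj (c jk.2) * w (p jk.2)) with hA
  set g : ℕ × ℕ → ℝ → ℂ :=
    fun jk x => A jk * Complex.exp ((x * (p jk.1 - p jk.2) : ℝ) * Complex.I) with hg
  -- summability of coefficients
  have hc2 : Summable fun j => ‖c j‖ ^ 2 := by
    have := (summable_norm_sq u).comp_injective hp
    refine this.congr fun j => ?_
    simp [Function.comp, hc j]
  have hv2 : Summable fun j => ‖v (p j)‖ ^ 2 := (summable_norm_sq v).comp_injective hp
  have hw2 : Summable fun j => ‖w (p j)‖ ^ 2 := (summable_norm_sq w).comp_injective hp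
  have ha : Summable fun j => ‖v (p j)‖ * ‖c j‖ :=
    summable_mul_of_sq hv2 hc2 (fun _ => norm_nonneg _) (fun _ => norm_nonneg _)
  have hb : Summable fun k => ‖c k‖ * ‖w (p k)‖ :=
    summable_mul_of_sq hc2 hw2 (fun _ => norm_nonneg _) (fun _ => norm_nonneg _)
  have hAsum : Summable fun jk : ℕ × ℕ => ‖A jk‖ := by
    have := ha.mul_of_nonneg hb (fun j => by positivity) (fun k => by positivity)
    refine this.congr fun jk => ?_
    simp [hA, norm_mul]
  -- expansion of the inner products
  have hF : ∀ x : ℝ, (inner ℂ v (Mhat x u) : ℂ)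
      = ∑' j, conj (v (p j)) * (Complex.exp ((x * p j : ℝ) * Complex.I) * c j) := by
    intro x
    rw [lp.inner_eq_tsum,
      ← hp.tsum_eq (f := fun t : ℝ => (inner ℂ (v t) ((Mhat x u) t) : ℂ))]
    · exact tsum_congr fun j => by simp [RCLike.inner_apply, hMhat, hc j]; ring
    · intro t ht
      by_cases h0 : u t = 0
      · exact absurd (by simp [RCLike.inner_apply, hMhat, h0]) ht
      · exact hsupp t h0
  have hG : ∀ x : ℝ, (inner ℂ (Mhat x u) w : ℂ)
      = ∑' k, conj (Complex.exp ((x * p k : ℝ) * Complex.I) * c k) * w (p k) := by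
    intro x
    rw [lp.inner_eq_tsum,
      ← hp.tsum_eq (f := fun t : ℝ => (inner ℂ ((Mhat x u) t) (w t) : ℂ))]
    · exact tsum_congr fun k => by simp [RCLike.inner_apply, hMhat, hc k]; ring
    · intro t ht
      by_cases h0 : u t = 0
      · exact absurd (by simp [RCLike.inner_apply, hMhat, h0]) ht
      · exact hsupp t h0
  have hFs : ∀ x : ℝ, Summable fun j =>
      ‖conj (v (p j)) * (Complex.exp ((x * p j : ℝ) * Complex.I) * c j)‖ := by
    intro x
    refine ha.congr fun j => ?_
    rw [norm_mul, norm_mul, RCLike.norm_conj, Complex.norm_exp_ofReal_mul_I, one_mul]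
  have hGs : ∀ x : ℝ, Summable fun k =>
      ‖conj (Complex.exp ((x * p k : ℝ) * Complex.I) * c k) * w (p k)‖ := by
    intro x
    refine hb.congr fun k => ?_
    rw [norm_mul, RCLike.norm_conj, norm_mul, Complex.norm_exp_ofReal_mul_I, one_mul]
  have key : ∀ x : ℝ,
      (inner ℂ v (Mhat x u) : ℂ) * (inner ℂ (Mhat x u) w : ℂ) = ∑' jk : ℕ × ℕ, g jk x := by
    intro x
    rw [hF x, hG x, tsum_mul_tsum_of_summable_norm (hFs x) (hGs x)]
    refine tsum_congr fun jk => ?_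
    have h2 : Complex.exp ((x * p jk.1 : ℝ) * Complex.I) *
        conj (Complex.exp ((x * p jk.2 : ℝ) * Complex.I))
        = Complex.exp ((x * (p jk.1 - p jk.2) : ℝ) * Complex.I) := by
      rw [exp_mul_conj_exp]
      congr 2
      push_cast
      ring
    simp only [hg, hA, map_mul]
    linear_combination (conj (v (p jk.1)) * c jk.1 * (conj (c jk.2) * w (p jk.2))) * h2
  -- continuity / integrability
  have hgcont : ∀ jk : ℕ × ℕ, Continuous (g jk) := by
    intro jk
    apply Continuous.mul continuous_const
    exact Complex.continuous_exp.comp (by fun_prop)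
  have hgnorm : ∀ (jk : ℕ × ℕ) (x : ℝ), ‖g jk x‖ ≤ ‖A jk‖ := by
    intro jk x
    show ‖A jk * Complex.exp ((x * (p jk.1 - p jk.2) : ℝ) * Complex.I)‖ ≤ ‖A jk‖
    rw [norm_mul, Complex.norm_exp_ofReal_mul_I, mul_one]
  have hcont : Continuous fun x : ℝ => ∑' jk : ℕ × ℕ, g jk x :=
    continuous_tsum hgcont hAsum hgnorm
  have hfeq : (fun x : ℝ => (inner ℂ v (Mhat x u) : ℂ) * (inner ℂ (Mhat x u) w : ℂ))
      = fun x => ∑' jk : ℕ × ℕ, g jk x := funext key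
  have hint : Integrable (fun x : ℝ =>
      (inner ℂ v (Mhat x u) : ℂ) * (inner ℂ (Mhat x u) w : ℂ)) μ := by
    rw [hfeq]
    refine (integrable_const (∑' jk : ℕ × ℕ, ‖A jk‖)).mono'
      hcont.aestronglyMeasurable (ae_of_all _ fun x => ?_)
    calc ‖∑' jk : ℕ × ℕ, g jk x‖ ≤ ∑' jk : ℕ × ℕ, ‖g jk x‖ :=
          norm_tsum_le_tsum_norm (hAsum.of_nonneg_of_le (fun _ => norm_nonneg _)
            fun jk => hgnorm jk x)
      _ ≤ ∑' jk : ℕ × ℕ, ‖A jk‖ := by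
          refine Summable.tsum_le_tsum (fun jk => hgnorm jk x) ?_ hAsum
          exact hAsum.of_nonneg_of_le (fun _ => norm_nonneg _) fun jk => hgnorm jk x
  -- bound on characteristic function
  have hχ : ∀ h : ℝ, ‖∫ y, Complex.exp ((h * y : ℝ) * Complex.I) ∂μ‖ ≤ 1 := by
    intro h
    calc ‖∫ y, Complex.exp ((h * y : ℝ) * Complex.I) ∂μ‖
        ≤ ∫ y, ‖Complex.exp ((h * y : ℝ) * Complex.I)‖ ∂μ := norm_integral_le_integral_norm _
      _ = 1 := by
          simp only [Complex.norm_exp_ofReal_mul_I]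
          simp
  -- summability of the kernel series
  have hsum2 : Summable (fun jk : ℕ × ℕ =>
      ‖c jk.1 * conj (c jk.2) *
          (∫ y, Complex.exp (((p jk.1 - p jk.2) * y : ℝ) * Complex.I) ∂μ) *
          conj (v (p jk.1)) * w (p jk.2)‖) := by
    have hprod := ha.mul_of_nonneg hb (fun j => by positivity) (fun k => by positivity)
    refine hprod.of_nonneg_of_le (fun _ => norm_nonneg _) fun jk => ?_
    have h1 := hχ (p jk.1 - p jk.2)
    calc ‖c jk.1 * conj (c jk.2) *
          (∫ y, Complex.exp (((p jk.1 - p jk.2) * y : ℝ) * Complex.I) ∂μ) *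
          conj (v (p jk.1)) * w (p jk.2)‖
        = ‖c jk.1‖ * ‖c jk.2‖ *
            ‖∫ y, Complex.exp (((p jk.1 - p jk.2) * y : ℝ) * Complex.I) ∂μ‖ *
            ‖v (p jk.1)‖ * ‖w (p jk.2)‖ := by
          simp [norm_mul]
      _ ≤ ‖c jk.1‖ * ‖c jk.2‖ * 1 * ‖v (p jk.1)‖ * ‖w (p jk.2)‖ := by
          gcongr
      _ = ‖v (p jk.1)‖ * ‖c jk.1‖ * (‖c jk.2‖ * ‖w (p jk.2)‖) := by ring
  refine ⟨hint, hsum2, ?_⟩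
  -- exchange integral and sum
  have hmeas : ∀ jk : ℕ × ℕ, AEStronglyMeasurable (g jk) μ :=
    fun jk => (hgcont jk).aestronglyMeasurable
  have hAnn : Summable fun jk : ℕ × ℕ => ‖A jk‖₊ :=
    NNReal.summable_coe.1 (by simpa [coe_nnnorm] using hAsum)
  have hlintle : ∀ jk : ℕ × ℕ, (∫⁻ a, ‖g jk a‖₊ ∂μ) ≤ (‖A jk‖₊ : ℝ≥0∞) := by
    intro jk
    calc (∫⁻ a, ‖g jk a‖₊ ∂μ) ≤ ∫⁻ _, (‖A jk‖₊ : ℝ≥0∞) ∂μ := by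
          refine lintegral_mono fun a => ?_
          rw [ENNReal.coe_le_coe, ← NNReal.coe_le_coe, coe_nnnorm, coe_nnnorm]
          exact hgnorm jk a
      _ = ‖A jk‖₊ := by simp
  have hne : (∑' jk : ℕ × ℕ, ∫⁻ a, ‖g jk a‖₊ ∂μ) ≠ ∞ := by
    refine ne_top_of_le_ne_top ?_ (ENNReal.tsum_le_tsum hlintle)
    exact ENNReal.tsum_coe_ne_top_iff_summable.2 hAnn
  have hswap := integral_tsum (μ := μ) (f := g) hmeas hne
  rw [hfeq, hswap]
  refine tsum_congr fun jk => ?_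
  have hintg : ∫ x, g jk x ∂μ
      = A jk * ∫ x, Complex.exp ((x * (p jk.1 - p jk.2) : ℝ) * Complex.I) ∂μ :=
    integral_const_mul _ _
  have hflip : (∫ x, Complex.exp ((x * (p jk.1 - p jk.2) : ℝ) * Complex.I) ∂μ)
      = ∫ y, Complex.exp (((p jk.1 - p jk.2) * y : ℝ) * Complex.I) ∂μ := by
    congr 1
    funext y
    rw [mul_comm y]
  rw [hintg, hflip, hA]
  ring


end
end
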